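/- In the ring of formal power series over ℚ in algebraically independent graded indeterminates X_1, X_2, … and a further variable t, the logarithmic form of Thrall's theorem holds: ∑_{k ≥ 1} (1/k) · ∑_{n ≥ 1} (t^{kn}/n) · ∑_{d ∣ n} μ(d) · X_{k·d}^{n/d} = ∑_{m ≥ 1} t^m X_1^m / m = −log(1 − t·X_1). -/

import Mathlib

open Classical PowerSeries ArithmeticFunction

/-- Coefficientwise topology on power series in `t` over the ring of formal
power series in countably many indeterminates `X_0, X_1, …`; infinite sums are
computed coefficientwise. -/
noncomputable instance : TopologicalSpace (PowerSeries (MvPowerSeries ℕ ℚ)) :=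
  inferInstanceAs (TopologicalSpace ((Unit →₀ ℕ) → ((ℕ →₀ ℕ) → ℚ)))

/-- The indeterminate `X_d`, playing the role of the power sum `p_d`, viewed as
a constant power series in `t`. -/
noncomputable def Xv (d : ℕ) : PowerSeries (MvPowerSeries ℕ ℚ) :=
  PowerSeries.C (MvPowerSeries.X d)

/-- The formal logarithm `log F = ∑_{n≥1} (−1)^{n−1} (F−1)^n / n` (the intended
value when `F − 1` has positive order). -/
noncomputable def logS (F : PowerSeries (MvPowerSeries ℕ ℚ)) :
    PowerSeries (MvPowerSeries ℕ ℚ) :=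
  ∑' (n : ℕ), if 1 ≤ n then (((-1 : ℚ) ^ (n - 1) / n) • (F - 1) ^ n) else 0

/-! ### Auxiliary material -/

noncomputable instance : TopologicalSpace (MvPowerSeries ℕ ℚ) :=
  inferInstanceAs (TopologicalSpace ((ℕ →₀ ℕ) → ℚ))

noncomputable instance : ContinuousAdd (MvPowerSeries ℕ ℚ) :=
  inferInstanceAs (ContinuousAdd ((ℕ →₀ ℕ) → ℚ))

noncomputable instance : ContinuousAdd (PowerSeries (MvPowerSeries ℕ ℚ)) :=
  inferInstanceAs (ContinuousAdd ((Unit →₀ ℕ) → ((ℕ →₀ ℕ) → ℚ)))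

noncomputable instance : IsTopologicalAddGroup (PowerSeries (MvPowerSeries ℕ ℚ)) :=
  inferInstanceAs (IsTopologicalAddGroup ((Unit →₀ ℕ) → ((ℕ →₀ ℕ) → ℚ)))

lemma myT2 : T2Space (PowerSeries (MvPowerSeries ℕ ℚ)) :=
  inferInstanceAs (T2Space ((Unit →₀ ℕ) → ((ℕ →₀ ℕ) → ℚ)))

lemma ps_apply (F : PowerSeries (MvPowerSeries ℕ ℚ)) (e : Unit →₀ ℕ) :
    F e = PowerSeries.coeff (e ()) F := by
  conv_lhs => rw [show e = Finsupp.single () (e ()) from Finsupp.unique_single e]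
  rfl

lemma pi_hasSum (f : ℕ → PowerSeries (MvPowerSeries ℕ ℚ)) (g : PowerSeries (MvPowerSeries ℕ ℚ)) :
    HasSum f g ↔ ∀ e : Unit →₀ ℕ, HasSum (fun n => f n e) (g e) := Pi.hasSum

lemma fin_hasSum (f : ℕ → MvPowerSeries ℕ ℚ) (s : Finset ℕ) (h : ∀ n ∉ s, f n = 0) :
    HasSum f (∑ n ∈ s, f n) := hasSum_sum_of_ne_finset_zero h

lemma sum_moebius' (j : ℕ) : ∑ d ∈ j.divisors, (moebius d : ℤ) = if j = 1 then 1 else 0 := by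
  rw [← ArithmeticFunction.coe_mul_zeta_apply, ArithmeticFunction.moebius_mul_coe_zeta,
    ArithmeticFunction.one_apply]

/-- The general term of the double sum. -/
noncomputable def trm (k n : ℕ) : PowerSeries (MvPowerSeries ℕ ℚ) :=
  if 1 ≤ k ∧ 1 ≤ n then
    (((k : ℚ))⁻¹ * ((n : ℚ))⁻¹) •
      ((PowerSeries.X : PowerSeries (MvPowerSeries ℕ ℚ)) ^ (k * n) *
        ∑ d ∈ n.divisors, ((moebius d : ℚ)) • (Xv (k * d)) ^ (n / d))
  else 0

/-- The `MvPowerSeries`-coefficient of `trm k n` at `t`-degree `k*n`. -/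
noncomputable def crm (k n : ℕ) : MvPowerSeries ℕ ℚ :=
  (((k : ℚ))⁻¹ * ((n : ℚ))⁻¹) •
      ∑ d ∈ n.divisors, ((moebius d : ℚ)) • (MvPowerSeries.X (k * d) : MvPowerSeries ℕ ℚ) ^ (n / d)

lemma smul_C' (q : ℚ) (a : MvPowerSeries ℕ ℚ) :
    q • (PowerSeries.C a) = PowerSeries.C (q • a) := by
  ext n
  rw [PowerSeries.coeff_smul, PowerSeries.coeff_C, PowerSeries.coeff_C]
  split_ifs <;> simp

lemma C_divisor_sum (k n : ℕ) :
    (∑ d ∈ n.divisors, ((moebius d : ℚ)) • (Xv (k * d)) ^ (n / d))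
      = PowerSeries.C
        (∑ d ∈ n.divisors, ((moebius d : ℚ)) • (MvPowerSeries.X (k * d) : MvPowerSeries ℕ ℚ) ^ (n / d)) := by
  rw [map_sum]
  refine Finset.sum_congr rfl fun d _ => ?_
  rw [← smul_C', Xv, ← map_pow]

lemma coeff_trm (k n m : ℕ) :
    PowerSeries.coeff m (trm k n)
      = if 1 ≤ k ∧ 1 ≤ n ∧ k * n = m then crm k n else 0 := by
  unfold trm crm
  by_cases h : 1 ≤ k ∧ 1 ≤ n
  · rw [if_pos h, C_divisor_sum, PowerSeries.coeff_smul, PowerSeries.coeff_X_pow_mul',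
      PowerSeries.coeff_C]
    by_cases hm : k * n = m
    · rw [if_pos hm.le, if_pos (Nat.sub_eq_zero_of_le hm.ge), if_pos ⟨h.1, h.2, hm⟩]
    · rw [if_neg (fun hc : 1 ≤ k ∧ 1 ≤ n ∧ k * n = m => hm hc.2.2)]
      split_ifs with h1 h2
      · exact absurd (Nat.le_antisymm h1 (Nat.sub_eq_zero_iff_le.mp h2)) hm
      · exact smul_zero _
      · exact smul_zero _
  · rw [if_neg h, _root_.map_zero, if_neg (by tauto)]

/-- Partial (coefficientwise finite) sums over `n` of `trm k n`. -/
noncomputable def Fk (k : ℕ) : PowerSeries (MvPowerSeries ℕ ℚ) :=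
  fun e => ∑ n ∈ Finset.range (e () + 1), trm k n e

/-- The common value `∑_{m ≥ 1} t^m X_1^m / m`, as a raw function. -/
noncomputable def G : PowerSeries (MvPowerSeries ℕ ℚ) :=
  fun e => if 1 ≤ e () then
    ((e () : ℚ)⁻¹) • (MvPowerSeries.X 1 : MvPowerSeries ℕ ℚ) ^ (e ()) else 0

lemma hasSum_inner (k : ℕ) : HasSum (trm k) (Fk k) := by
  rw [pi_hasSum]
  intro e
  refine fin_hasSum _ (Finset.range (e () + 1)) fun n hn => ?_
  rw [ps_apply (trm k n) e, coeff_trm, if_neg]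
  rintro ⟨hk, hn', he⟩
  have h1 : n ≤ k * n := Nat.le_mul_of_pos_left n hk
  have h2 : n ≤ e () := he ▸ h1
  simp only [Finset.mem_range, not_lt] at hn
  omega

/-- The key combinatorial identity: per `t`-degree, Möbius inversion collapses the
double sum to a single monomial. -/
lemma key (m : ℕ) :
    ∑ k ∈ Finset.range (m + 1), ∑ n ∈ Finset.range (m + 1),
      (if 1 ≤ k ∧ 1 ≤ n ∧ k * n = m then crm k n else 0)
    = if 1 ≤ m then ((m : ℚ)⁻¹) • (MvPowerSeries.X 1 : MvPowerSeries ℕ ℚ) ^ m else 0 := by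
  by_cases hm' : 1 ≤ m
  swap
  · have hm0 : m = 0 := by omega
    subst hm0
    simp
  · have hm : 0 < m := hm'
    rw [if_pos hm']
    have h1 : ∑ k ∈ Finset.range (m + 1), ∑ n ∈ Finset.range (m + 1),
        (if 1 ≤ k ∧ 1 ≤ n ∧ k * n = m then crm k n else 0)
        = ∑ p ∈ m.divisorsAntidiagonal, crm p.1 p.2 := by
      rw [← Finset.sum_product']
      rw [← Finset.sum_filter]
      refine Finset.sum_congr ?_ fun _ _ => rfl
      ext p
      simp only [Finset.mem_filter, Finset.mem_product, Finset.mem_range,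
        Nat.mem_divisorsAntidiagonal]
      constructor
      · rintro ⟨-, hk, hn, hkn⟩
        exact ⟨hkn, by omega⟩
      · rintro ⟨hkn, hm0⟩
        have h1 : 1 ≤ p.1 := by
          rcases Nat.eq_zero_or_pos p.1 with h | h
          · exfalso; apply hm0; rw [← hkn, h, zero_mul]
          · exact h
        have h2 : 1 ≤ p.2 := by
          rcases Nat.eq_zero_or_pos p.2 with h | h
          · exfalso; apply hm0; rw [← hkn, h, mul_zero]
          · exact h
        have hle1 : p.1 ≤ m := Nat.le_of_dvd hm ⟨p.2, hkn.symm⟩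
        have hle2 : p.2 ≤ m := Nat.le_of_dvd hm ⟨p.1, by rw [mul_comm]; exact hkn.symm⟩
        exact ⟨⟨by omega, by omega⟩, h1, h2, hkn⟩
    rw [h1]
    have h2 : ∀ p ∈ m.divisorsAntidiagonal, crm p.1 p.2
        = (m : ℚ)⁻¹ • ∑ d ∈ p.2.divisors,
            ((moebius d : ℚ)) • (MvPowerSeries.X (p.1 * d) : MvPowerSeries ℕ ℚ) ^ (p.2 / d) := by
      intro p hp
      obtain ⟨hpm, hm0⟩ := Nat.mem_divisorsAntidiagonal.mp hp
      unfold crm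
      congr 1
      rw [← hpm, Nat.cast_mul, mul_inv]
    rw [Finset.sum_congr rfl h2, ← Finset.smul_sum]
    congr 1
    -- reindexing
    have h3 : (∑ p ∈ m.divisorsAntidiagonal, ∑ d ∈ p.2.divisors,
          ((moebius d : ℚ)) • (MvPowerSeries.X (p.1 * d) : MvPowerSeries ℕ ℚ) ^ (p.2 / d))
        = ∑ p ∈ m.divisorsAntidiagonal, ∑ d ∈ p.1.divisors,
          ((moebius d : ℚ)) • (MvPowerSeries.X p.1 : MvPowerSeries ℕ ℚ) ^ p.2 := by
      rw [Finset.sum_sigma', Finset.sum_sigma']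
      refine Finset.sum_nbij' (fun x => ⟨(x.1.1 * x.2, x.1.2 / x.2), x.2⟩)
        (fun x => ⟨(x.1.1 / x.2, x.2 * x.1.2), x.2⟩) ?_ ?_ ?_ ?_ ?_
      · rintro ⟨⟨k, n⟩, d⟩ hx
        simp only [Finset.mem_sigma, Nat.mem_divisorsAntidiagonal, Nat.mem_divisors] at hx ⊢
        obtain ⟨⟨hkn, hm0⟩, hd, hn0⟩ := hx
        have hdn : d * (n / d) = n := Nat.mul_div_cancel' hd
        constructor
        · constructor
          · rw [mul_assoc, hdn, hkn]
          · exact hm0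
        · refine ⟨dvd_mul_left d k, ?_⟩
          intro h
          rcases Nat.mul_eq_zero.mp h with h | h
          · apply hm0; rw [← hkn, h, zero_mul]
          · have hd1 : 1 ≤ d := Nat.pos_of_dvd_of_pos hd (by omega)
            omega
      · rintro ⟨⟨j, e⟩, d⟩ hx
        simp only [Finset.mem_sigma, Nat.mem_divisorsAntidiagonal, Nat.mem_divisors] at hx ⊢
        obtain ⟨⟨hje, hm0⟩, hd, hj0⟩ := hx
        have hdj : d * (j / d) = j := Nat.mul_div_cancel' hd
        constructor
        · constructor
          · calc j / d * (d * e) = (d * (j / d)) * e := by ring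
            _ = j * e := by rw [hdj]
            _ = m := hje
          · exact hm0
        · refine ⟨Dvd.intro e rfl, ?_⟩
          intro h
          rcases Nat.mul_eq_zero.mp h with h | h
          · have hd1 : 1 ≤ d := Nat.pos_of_dvd_of_pos hd (by omega)
            omega
          · apply hm0; rw [← hje, h, mul_zero]
      · rintro ⟨⟨k, n⟩, d⟩ hx
        simp only [Finset.mem_sigma, Nat.mem_divisorsAntidiagonal, Nat.mem_divisors] at hx
        obtain ⟨⟨hkn, hm0⟩, hd, hn0⟩ := hx
        have hd1 : 1 ≤ d := Nat.pos_of_dvd_of_pos hd (by omega)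
        have hdn : d * (n / d) = n := Nat.mul_div_cancel' hd
        simp only [Sigma.mk.inj_iff, Prod.mk.injEq, heq_eq_eq]
        refine ⟨⟨?_, ?_⟩, trivial⟩
        · rw [Nat.mul_div_cancel _ hd1]
        · exact hdn
      · rintro ⟨⟨j, e⟩, d⟩ hx
        simp only [Finset.mem_sigma, Nat.mem_divisorsAntidiagonal, Nat.mem_divisors] at hx
        obtain ⟨⟨hje, hm0⟩, hd, hj0⟩ := hx
        have hd1 : 1 ≤ d := Nat.pos_of_dvd_of_pos hd (by omega)
        have hdj : d * (j / d) = j := Nat.mul_div_cancel' hd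
        simp only [Sigma.mk.inj_iff, Prod.mk.injEq, heq_eq_eq]
        refine ⟨⟨?_, ?_⟩, trivial⟩
        · rw [mul_comm (j / d) d, hdj]
        · rw [Nat.mul_div_cancel_left _ hd1]
      · rintro ⟨⟨k, n⟩, d⟩ hx
        rfl
    rw [h3]
    have h4 : ∀ p ∈ m.divisorsAntidiagonal,
        (∑ d ∈ p.1.divisors, ((moebius d : ℚ)) • (MvPowerSeries.X p.1 : MvPowerSeries ℕ ℚ) ^ p.2)
          = (if p.1 = 1 then (1 : ℚ) else 0) • (MvPowerSeries.X p.1 : MvPowerSeries ℕ ℚ) ^ p.2 := by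
      intro p hp
      rw [← Finset.sum_smul]
      congr 1
      have hcast : (∑ d ∈ p.1.divisors, ((moebius d : ℚ)))
          = ((∑ d ∈ p.1.divisors, (moebius d : ℤ) : ℤ) : ℚ) := by push_cast; rfl
      rw [hcast, sum_moebius' p.1]
      split_ifs <;> simp
    rw [Finset.sum_congr rfl h4]
    rw [Finset.sum_eq_single (1, m)]
    · simp
    · rintro ⟨a, b⟩ hp hne
      simp only [Nat.mem_divisorsAntidiagonal] at hp
      by_cases ha : a = 1
      · exfalso; apply hne
        have : b = m := by rw [← hp.1, ha, one_mul]
        rw [ha, this]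
      · rw [if_neg ha, zero_smul]
    · intro h
      exfalso; apply h
      rw [Nat.mem_divisorsAntidiagonal]
      exact ⟨one_mul m, by omega⟩

lemma hasSum_outer : HasSum Fk G := by
  rw [pi_hasSum]
  intro e
  have h0 : ∀ k ∉ Finset.range (e () + 1), Fk k e = 0 := by
    intro k hk
    simp only [Finset.mem_range, not_lt] at hk
    show (∑ n ∈ Finset.range (e () + 1), trm k n e) = 0
    refine Finset.sum_eq_zero fun n hn => ?_
    rw [ps_apply (trm k n) e, coeff_trm, if_neg]
    rintro ⟨hk1, hn1, he⟩
    have h1 : k ≤ k * n := Nat.le_mul_of_pos_right k hn1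
    have h2 : k ≤ e () := he ▸ h1
    omega
  have h := fin_hasSum (fun k => Fk k e) (Finset.range (e () + 1)) h0
  have hval : (∑ k ∈ Finset.range (e () + 1), Fk k e) = G e := by
    have : ∀ k, Fk k e = ∑ n ∈ Finset.range (e () + 1),
        (if 1 ≤ k ∧ 1 ≤ n ∧ k * n = e () then crm k n else 0) := by
      intro k
      show (∑ n ∈ Finset.range (e () + 1), trm k n e) = _
      refine Finset.sum_congr rfl fun n _ => ?_
      rw [ps_apply (trm k n) e, coeff_trm]
    rw [Finset.sum_congr rfl fun k _ => this k, key (e ())]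
    rfl
  rwa [hval] at h

/-- The terms of the middle series. -/
noncomputable def gm (m : ℕ) : PowerSeries (MvPowerSeries ℕ ℚ) :=
  if 1 ≤ m then ((m : ℚ)⁻¹) • ((PowerSeries.X * Xv 1) ^ m) else 0

lemma coeff_gm (m m' : ℕ) :
    PowerSeries.coeff m' (gm m)
      = if 1 ≤ m ∧ m' = m then
          ((m : ℚ)⁻¹) • (MvPowerSeries.X 1 : MvPowerSeries ℕ ℚ) ^ m else 0 := by
  unfold gm
  by_cases h : 1 ≤ m
  · rw [if_pos h]
    have : (PowerSeries.X * Xv 1) ^ m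
        = (PowerSeries.X : PowerSeries (MvPowerSeries ℕ ℚ)) ^ m *
            PowerSeries.C ((MvPowerSeries.X 1 : MvPowerSeries ℕ ℚ) ^ m) := by
      rw [mul_pow, Xv, ← map_pow]
    rw [this, PowerSeries.coeff_smul, PowerSeries.coeff_X_pow_mul', PowerSeries.coeff_C]
    by_cases hm : m' = m
    · rw [if_pos hm.ge, if_pos (Nat.sub_eq_zero_of_le hm.le), if_pos ⟨h, hm⟩]
    · rw [if_neg (fun hc : 1 ≤ m ∧ m' = m => hm hc.2)]
      split_ifs with h1 h2
      · exact absurd (Nat.le_antisymm (Nat.sub_eq_zero_iff_le.mp h2) h1) hm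
      · exact smul_zero _
      · exact smul_zero _
  · rw [if_neg h, _root_.map_zero, if_neg (by tauto)]

lemma hasSum_gm : HasSum gm G := by
  rw [pi_hasSum]
  intro e
  have : (fun m => gm m e) = fun m => if m = e () then G e else 0 := by
    funext m
    rw [ps_apply (gm m) e, coeff_gm]
    show _ = if m = e () then G e else 0
    unfold G
    split_ifs with h1 h2 h3 <;> first | rfl | rw [h1.2] | omega
  rw [this]
  exact hasSum_ite_eq (e ()) (G e)

/-- Logarithmic form of Thrall's theorem:
`∑_{k≥1} (1/k) ∑_{n≥1} (t^{kn}/n) ∑_{d|n} μ(d) X_{kd}^{n/d}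
   = ∑_{m≥1} t^m X_1^m / m = −log(1 − t X_1)`. -/
theorem log_Thrall_H :
    (∑' (k : ℕ), ∑' (n : ℕ),
        (if 1 ≤ k ∧ 1 ≤ n then
            (((k : ℚ))⁻¹ * ((n : ℚ))⁻¹) •
              ((PowerSeries.X : PowerSeries (MvPowerSeries ℕ ℚ)) ^ (k * n) *
                ∑ d ∈ n.divisors, ((moebius d : ℚ)) • (Xv (k * d)) ^ (n / d))
          else 0))
      = (∑' (m : ℕ), if 1 ≤ m then
            ((m : ℚ)⁻¹) • ((PowerSeries.X * Xv 1) ^ m) else 0) ∧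
    (∑' (m : ℕ), if 1 ≤ m then
        ((m : ℚ)⁻¹) • ((PowerSeries.X * Xv 1) ^ m) else 0)
      = - logS (1 - PowerSeries.X * Xv 1) := by
  haveI : T2Space (PowerSeries (MvPowerSeries ℕ ℚ)) := myT2
  have hL1 : (∑' (k : ℕ), ∑' (n : ℕ),
        (if 1 ≤ k ∧ 1 ≤ n then
            (((k : ℚ))⁻¹ * ((n : ℚ))⁻¹) •
              ((PowerSeries.X : PowerSeries (MvPowerSeries ℕ ℚ)) ^ (k * n) *
                ∑ d ∈ n.divisors, ((moebius d : ℚ)) • (Xv (k * d)) ^ (n / d))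
          else 0)) = ∑' (k : ℕ), Fk k := by
    refine tsum_congr fun k => ?_
    exact (hasSum_inner k).tsum_eq
  have hmid : (∑' (m : ℕ), if 1 ≤ m then
        ((m : ℚ)⁻¹) • ((PowerSeries.X * Xv 1) ^ m) else 0) = G := hasSum_gm.tsum_eq
  constructor
  · rw [hL1, hasSum_outer.tsum_eq, hmid]
  · rw [hmid]
    have hlog : logS (1 - PowerSeries.X * Xv 1) = -G := by
      unfold logS
      have heq : (fun n : ℕ => if 1 ≤ n then
          (((-1 : ℚ) ^ (n - 1) / n) • ((1 - PowerSeries.X * Xv 1) - 1) ^ n) else 0)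
          = fun n => - gm n := by
        funext n
        unfold gm
        by_cases h : 1 ≤ n
        · rw [if_pos h, if_pos h]
          have hsub : ((1 - PowerSeries.X * Xv 1) - 1 : PowerSeries (MvPowerSeries ℕ ℚ))
              = -(PowerSeries.X * Xv 1) := by ring
          rw [hsub]
          rcases Nat.even_or_odd n with he | ho
          · rw [he.neg_pow]
            have hodd : Odd (n - 1) := by
              rcases he with ⟨j, hj⟩
              exact ⟨j - 1, by omega⟩
            rw [hodd.neg_one_pow]
            rw [div_eq_mul_inv, neg_one_mul, neg_smul]
          · rw [ho.neg_pow]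
            have heven : Even (n - 1) := by
              rcases ho with ⟨j, hj⟩
              exact ⟨j, by omega⟩
            rw [heven.neg_one_pow]
            rw [div_eq_mul_inv, one_mul, smul_neg]
        · rw [if_neg h, if_neg h, neg_zero]
      rw [heq]
      rw [hasSum_gm.neg.tsum_eq]
    rw [hlog, neg_neg]
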